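/- The sequence r ↦ (4·F(2r-2) + 3·F(2r-3) - 2) / F(2r) of real numbers converges to √5 as r → ∞. -/

import Mathlib

open Filter Real goldenRatio

private lemma fib_ratio_tendsto :
    Tendsto (fun n : ℕ => (Nat.fib (n + 1) : ℝ) / Nat.fib n) atTop (nhds φ) := by
  have hq : |ψ / φ| < 1 := by
    rw [abs_div, abs_of_pos goldenRatio_pos, div_lt_one goldenRatio_pos, abs_of_neg goldenConj_neg]
    nlinarith [neg_one_lt_goldenConj, one_lt_goldenRatio]
  have hpow : Tendsto (fun n : ℕ => (ψ / φ) ^ n) atTop (nhds 0) :=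
    tendsto_pow_atTop_nhds_zero_of_abs_lt_one hq
  have hA : Tendsto (fun n : ℕ => φ - ψ * (ψ / φ) ^ n) atTop (nhds (φ - ψ * 0)) :=
    tendsto_const_nhds.sub (hpow.const_mul ψ)
  have hB : Tendsto (fun n : ℕ => 1 - (ψ / φ) ^ n) atTop (nhds (1 - 0)) :=
    tendsto_const_nhds.sub hpow
  have h : Tendsto (fun n : ℕ => (φ - ψ * (ψ / φ) ^ n) / (1 - (ψ / φ) ^ n)) atTop (nhds φ) := by
    have := hA.div hB (by norm_num)
    simp only [mul_zero, sub_zero, div_one] at this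
    exact this
  refine h.congr' ?_
  filter_upwards [eventually_ge_atTop 1] with n hn
  have hfib : 0 < Nat.fib n := Nat.fib_pos.mpr hn
  have hfibR : (0 : ℝ) < Nat.fib n := by exact_mod_cast hfib
  have h5 : (0 : ℝ) < Real.sqrt 5 := Real.sqrt_pos.mpr (by norm_num)
  have hb : (Nat.fib n : ℝ) = (φ ^ n - ψ ^ n) / Real.sqrt 5 := Real.coe_fib_eq n
  have hb' : (Nat.fib (n + 1) : ℝ) = (φ ^ (n + 1) - ψ ^ (n + 1)) / Real.sqrt 5 :=
    Real.coe_fib_eq (n + 1)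
  have h1 : φ ^ n - ψ ^ n ≠ 0 := by
    intro h0
    rw [hb, h0] at hfibR
    simp at hfibR
  have h2 : 1 - (ψ / φ) ^ n ≠ 0 := by
    rw [div_pow]
    intro h0
    apply h1
    have := sub_eq_zero.mp h0
    field_simp at this ⊢
    linarith
  have key : ∀ a b x : ℝ, a ≠ 0 → x ≠ 0 → a ^ n - b ^ n ≠ 0 → 1 - (b / a) ^ n ≠ 0 →
      (a - b * (b / a) ^ n) / (1 - (b / a) ^ n) =
        (a ^ (n + 1) - b ^ (n + 1)) / x / ((a ^ n - b ^ n) / x) := by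
    intro a b x ha hx hd h2
    rw [div_pow] at h2 ⊢
    field_simp
    ring
  rw [hb, hb']
  exact key φ ψ (Real.sqrt 5) goldenRatio_ne_zero (ne_of_gt h5) h1 h2

theorem area_perimeter_ratio_tendsto :
    Filter.Tendsto (fun r : ℕ =>
      ((4 * Nat.fib (2 * r - 2) + 3 * Nat.fib (2 * r - 3) : ℝ) - 2) / Nat.fib (2 * r))
      Filter.atTop (nhds (Real.sqrt 5)) := by
  have h5 : √5 * √5 = 5 := Real.mul_self_sqrt (by norm_num)
  -- index maps
  have hidx : ∀ c : ℕ, Tendsto (fun r : ℕ => 2 * r - c) atTop atTop := by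
    intro c
    refine tendsto_atTop_atTop.mpr fun b => ⟨b + c, fun a ha => by omega⟩
  -- inverse of fib tends to 0
  have hfibtop : Tendsto (fun n : ℕ => (Nat.fib n : ℝ)) atTop atTop := by
    refine tendsto_atTop_mono' atTop ?_ tendsto_natCast_atTop_atTop
    filter_upwards [eventually_ge_atTop 5] with n hn
    exact_mod_cast Nat.le_fib_self hn
  have hinv : Tendsto (fun n : ℕ => ((Nat.fib n : ℝ))⁻¹) atTop (nhds 0) :=
    hfibtop.inv_tendsto_atTop
  have hρ := fib_ratio_tendsto
  set ρ : ℕ → ℝ := fun n => (Nat.fib (n + 1) : ℝ) / Nat.fib n with hρdef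
  have hρ3 : Tendsto (fun r : ℕ => ρ (2 * r - 3)) atTop (nhds φ) := hρ.comp (hidx 3)
  have hρ2 : Tendsto (fun r : ℕ => ρ (2 * r - 2)) atTop (nhds φ) := hρ.comp (hidx 2)
  have hρ1 : Tendsto (fun r : ℕ => ρ (2 * r - 1)) atTop (nhds φ) := hρ.comp (hidx 1)
  have hinv3 : Tendsto (fun r : ℕ => ((Nat.fib (2 * r - 3) : ℝ))⁻¹) atTop (nhds 0) :=
    hinv.comp (hidx 3)
  have hφ3 : φ * φ * φ ≠ 0 := by positivity
  have hmain : Tendsto (fun r : ℕ =>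
      (4 * ρ (2 * r - 3) + 3 - 2 * ((Nat.fib (2 * r - 3) : ℝ))⁻¹) /
        (ρ (2 * r - 3) * ρ (2 * r - 2) * ρ (2 * r - 1))) atTop
      (nhds ((4 * φ + 3 - 2 * 0) / (φ * φ * φ))) := by
    exact (((hρ3.const_mul 4).add_const 3).sub (hinv3.const_mul 2)).div
      ((hρ3.mul hρ2).mul hρ1) hφ3
  have hval : (4 * φ + 3 - 2 * 0) / (φ * φ * φ) = √5 := by
    rw [div_eq_iff hφ3]
    rw [goldenRatio]
    linear_combination ((-√5 ^ 2 - 3 * √5 - 8) / 8) * h5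
  rw [hval] at hmain
  refine hmain.congr' ?_
  filter_upwards [eventually_ge_atTop 2] with r hr
  have e1 : 2 * r - 3 + 1 = 2 * r - 2 := by omega
  have e2 : 2 * r - 2 + 1 = 2 * r - 1 := by omega
  have e3 : 2 * r - 1 + 1 = 2 * r := by omega
  have ha : (0 : ℝ) < Nat.fib (2 * r - 3) := by
    exact_mod_cast Nat.fib_pos.mpr (by omega)
  have hbb : (0 : ℝ) < Nat.fib (2 * r - 2) := by
    exact_mod_cast Nat.fib_pos.mpr (by omega)
  have hc : (0 : ℝ) < Nat.fib (2 * r - 1) := by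
    exact_mod_cast Nat.fib_pos.mpr (by omega)
  have hd : (0 : ℝ) < Nat.fib (2 * r) := by
    exact_mod_cast Nat.fib_pos.mpr (by omega)
  simp only [hρdef, e1, e2, e3]
  field_simp
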